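/- Urzyczyn's term 𝕌 = (λr. h (r (λf.λs. f s)) (r (λq.λg. g q))) (λo. o o o) is strongly normalizing: every β-reduction sequence starting from 𝕌 is finite. -/
import Mathlib


/-- Untyped lambda terms in de Bruijn representation. -/
inductive Lam : Type
  | var : Nat → Lam
  | app : Lam → Lam → Lam
  | lam : Lam → Lam
deriving DecidableEq

namespace Lam

/-- Lift (shift) free variables at or above `d` by one. -/
def lift (d : Nat) : Lam → Lam
  | var n => if n < d then var n else var (n + 1)
  | app M N => app (lift d M) (lift d N)
  | lam M => lam (lift (d + 1) M)

/-- Capture-avoiding substitution of `s` for the variable with index `k`. -/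
def subst (k : Nat) (s : Lam) : Lam → Lam
  | var n => if n < k then var n else if n = k then s else var (n - 1)
  | app M N => app (subst k s M) (subst k s N)
  | lam M => lam (subst (k + 1) (lift 0 s) M)

/-- One-step β-reduction (compatible closure of the β-rule). -/
inductive Beta : Lam → Lam → Prop
  | beta (M N : Lam) : Beta (app (lam M) N) (subst 0 N M)
  | appL {M M'} (N) : Beta M M' → Beta (app M N) (app M' N)
  | appR (M) {N N'} : Beta N N' → Beta (app M N) (app M N')
  | lamC {M M'} : Beta M M' → Beta (lam M) (lam M')

/-- Multistep β-reduction `↠_β`. -/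
def BetaStar : Lam → Lam → Prop := Relation.ReflTransGen Beta

/-- `M` is a β-normal form. -/
def Normal (M : Lam) : Prop := ∀ N, ¬ Beta M N

/-- `M` is strongly normalizing: no infinite β-reduction sequence starts at `M`. -/
def SN (M : Lam) : Prop := ¬ ∃ f : ℕ → Lam, f 0 = M ∧ ∀ n, Beta (f n) (f (n + 1))

end Lam

namespace Lam

/-- `λf.λs. f s`. -/
def Tpure : Lam := lam (lam (app (var 1) (var 0)))

/-- `λq.λg. g q`. -/
def Jpure : Lam := lam (lam (app (var 0) (var 1)))

/-- Urzyczyn's term `𝕌 = (λr. h (r (λf.λs. f s)) (r (λq.λg. g q))) (λo. o o o)`,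
with `h` a free variable (de Bruijn index 1 under the binder for `r`,
i.e. index 0 of the whole term). -/
def Urz : Lam :=
  app (lam (app (app (var 1) (app (var 0) Tpure)) (app (var 0) Jpure)))
      (lam (app (app (var 0) (var 0)) (var 0)))

/-- Head β-reducts. -/
def headRed : Lam → Lam → List Lam
  | lam M, N => [subst 0 N M]
  | _, _ => []

/-- All one-step β-reducts. -/
def succs : Lam → List Lam
  | var _ => []
  | app M N => headRed M N ++ (succs M).map (app · N) ++ (succs N).map (app M ·)
  | lam M => (succs M).map lam

theorem beta_mem_succs {M N : Lam} (h : Beta M N) : N ∈ succs M := by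
  induction h with
  | beta M N =>
      simp [succs, headRed]
  | appL N _ ih =>
      simp only [succs, List.mem_append, List.mem_map]
      exact Or.inl (Or.inr ⟨_, ih, rfl⟩)
  | appR M _ ih =>
      simp only [succs, List.mem_append, List.mem_map]
      exact Or.inr ⟨_, ih, rfl⟩
  | lamC _ ih =>
      simp only [succs, List.mem_map]
      exact ⟨_, ih, rfl⟩

theorem mem_succs_beta : ∀ {M N : Lam}, N ∈ succs M → Beta M N := by
  intro M
  induction M with
  | var n => intro N h; simp [succs] at h
  | app M P ihM ihP =>
      intro N h
      simp only [succs, List.mem_append, List.mem_map] at h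
      rcases h with ((h | ⟨M', hM', rfl⟩) | ⟨P', hP', rfl⟩)
      · cases M with
        | lam M =>
            simp [headRed] at h
            subst h
            exact Beta.beta M P
        | var n => simp [headRed] at h
        | app a b => simp [headRed] at h
      · exact Beta.appL _ (ihM hM')
      · exact Beta.appR _ (ihP hP')
  | lam M ih =>
      intro N h
      simp only [succs, List.mem_map] at h
      rcases h with ⟨M', hM', rfl⟩
      exact Beta.lamC (ih hM')

/-- Check all β-reduction paths from `M` have length at most `n`. -/
def bsn : Nat → Lam → Bool
  | 0, M => (succs M).isEmpty
  | n + 1, M => (succs M).all (bsn n)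

theorem bsn_acc : ∀ n M, bsn n M = true → Acc (fun a b : Lam => Beta b a) M := by
  intro n
  induction n with
  | zero =>
      intro M h
      refine Acc.intro M fun N hN => absurd (beta_mem_succs hN) ?_
      simp only [bsn, List.isEmpty_iff] at h
      simp [h]
  | succ n ih =>
      intro M h
      refine Acc.intro M fun N hN => ih N ?_
      simp only [bsn, List.all_eq_true] at h
      exact h N (beta_mem_succs hN)

theorem acc_sn {M : Lam} (h : Acc (fun a b : Lam => Beta b a) M) : SN M := by
  induction h with
  | intro x _ ih =>
      rintro ⟨f, rfl, hc⟩
      exact ih (f 1) (hc 0) ⟨fun n => f (n + 1), rfl, fun n => hc (n + 1)⟩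

end Lam

/-- Urzyczyn's term is strongly normalizing. -/
theorem Urz_SN : Lam.SN Lam.Urz :=
  Lam.acc_sn (Lam.bsn_acc 10 Lam.Urz (by decide))
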